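/- Let f : ℝ^d → ℝ be twice continuously differentiable with L1-Lipschitz gradient and L2-Lipschitz Hessian, let ε₂ ∈ (0,1), and let x₀ satisfy f(x₀) − inf f ≤ Δ < ∞. Suppose x₁ = x₀ and (v_j) are unit vectors such that for every j: (i) λ_min(∇²f(x_j)) ≥ v_jᵀ∇²f(x_j)v_j − max(ε₂, ‖∇f(x_j)‖)/2 and v_jᵀ∇²f(x_j)v_j ≤ 0; (ii) x_{j+1} = x_j − (2·|v_jᵀ∇²f(x_j)v_j|/L2)·sign(v_jᵀ∇f(x_j))·v_j if 2·|v_jᵀ∇²f(x_j)v_j|³/(3·L2²) > ‖∇f(x_j)‖²/(2·L1), and x_{j+1} = x_j − (1/L1)·∇f(x_j) otherwise. Then the first index j* with v_{j*}ᵀ∇²f(x_{j*})v_{j*} > −ε₂/2 and ‖∇f(x_{j*})‖ ≤ ε₂^{3/2} satisfies j* ≤ 1 + (max(12·L2², 2·L1)/ε₂³)·(f(x₁) − f(x_{j*})) ≤ 1 + (max(12·L2², 2·L1)/ε₂³)·Δ, and at termination λ_min(∇²f(x_{j*})) ≥ −ε₂. -/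

import Mathlib

open scoped RealInnerProductSpace

noncomputable def sgn (t : ℝ) : ℝ := if 0 ≤ t then 1 else -1

lemma sgn_mul_self (t : ℝ) : sgn t * t = |t| := by
  unfold sgn; split_ifs with h
  · simp [abs_of_nonneg h]
  · rw [abs_of_neg (lt_of_not_ge h)]; ring

lemma sgn_sq (t : ℝ) : sgn t * sgn t = 1 := by
  unfold sgn; split_ifs <;> norm_num

lemma abs_sgn (t : ℝ) : |sgn t| = 1 := by
  unfold sgn; split_ifs <;> norm_num

section Taylor
variable {E : Type*} [NormedAddCommGroup E] [InnerProductSpace ℝ E] [CompleteSpace E]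

lemma line_hasDerivAt (x u : E) (t : ℝ) : HasDerivAt (fun s : ℝ => x + s • u) u t := by
  simpa using ((hasDerivAt_id t).smul_const u).const_add x

lemma grad_contDiff (f : E → ℝ) (hf : ContDiff ℝ 2 f) : ContDiff ℝ 1 (gradient f) :=
  (InnerProductSpace.toDual ℝ E).symm.toContinuousLinearEquiv.toContinuousLinearMap.contDiff.comp
    (hf.fderiv_right (by norm_num))

lemma deriv1 (f : E → ℝ) (hf : ContDiff ℝ 2 f) (x u : E) (t : ℝ) :
    HasDerivAt (fun s : ℝ => f (x + s • u)) ⟪gradient f (x + t • u), u⟫ t := by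
  have hdf := ((hf.differentiable (by norm_num)) (x + t • u)).hasGradientAt
  rw [hasGradientAt_iff_hasFDerivAt] at hdf
  have h := hdf.comp_hasDerivAt t (line_hasDerivAt x u t)
  simp [InnerProductSpace.toDual_apply_apply] at h ⊢
  exact h

lemma deriv2 (f : E → ℝ) (hf : ContDiff ℝ 2 f) (x u : E) (t : ℝ) :
    HasDerivAt (fun s : ℝ => ⟪gradient f (x + s • u), u⟫)
      ⟪(fderiv ℝ (gradient f) (x + t • u)) u, u⟫ t := by
  have hdg : HasFDerivAt (gradient f) (fderiv ℝ (gradient f) (x + t • u)) (x + t • u) :=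
    (((grad_contDiff f hf).differentiable one_ne_zero) (x + t • u)).hasFDerivAt
  simpa using (hdg.comp_hasDerivAt t (line_hasDerivAt x u t)).inner ℝ (hasDerivAt_const t u)

lemma cont1 (f : E → ℝ) (hf : ContDiff ℝ 2 f) (x u : E) :
    Continuous (fun s : ℝ => ⟪gradient f (x + s • u), u⟫) := by
  have h : Continuous (fun s : ℝ => x + s • u) := by fun_prop
  exact (((grad_contDiff f hf).continuous).comp h).inner continuous_const

lemma cont2 (f : E → ℝ) (hf : ContDiff ℝ 2 f) (x u : E) :
    Continuous (fun s : ℝ => ⟪(fderiv ℝ (gradient f) (x + s • u)) u, u⟫) := by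
  have hline : Continuous (fun s : ℝ => x + s • u) := by fun_prop
  have hH : Continuous (fderiv ℝ (gradient f)) :=
    (grad_contDiff f hf).continuous_fderiv one_ne_zero
  exact (((hH.comp hline).clm_apply continuous_const).inner continuous_const)

lemma taylor1 (f : E → ℝ) (L1 : ℝ) (hf : ContDiff ℝ 2 f)
    (hglip : ∀ a b : E, ‖gradient f a - gradient f b‖ ≤ L1 * ‖a - b‖) (x u : E) :
    f (x + u) ≤ f x + ⟪gradient f x, u⟫ + L1 / 2 * ‖u‖ ^ 2 := by
  have key : f (x + u) - f x = ∫ t in (0:ℝ)..1, ⟪gradient f (x + t • u), u⟫ := by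
    have := intervalIntegral.integral_eq_sub_of_hasDerivAt
      (f := fun s : ℝ => f (x + s • u)) (a := 0) (b := 1)
      (fun t _ => deriv1 f hf x u t) ((cont1 f hf x u).intervalIntegrable 0 1)
    simpa using this.symm
  have hmono : (∫ t in (0:ℝ)..1, ⟪gradient f (x + t • u), u⟫) ≤
      ∫ t in (0:ℝ)..1, (⟪gradient f x, u⟫ + L1 * ‖u‖ ^ 2 * t) := by
    apply intervalIntegral.integral_mono_on (by norm_num)
      ((cont1 f hf x u).intervalIntegrable 0 1)
      (by apply Continuous.intervalIntegrable; fun_prop)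
    intro t ht
    have h1 : ⟪gradient f (x + t • u), u⟫ - ⟪gradient f x, u⟫
        = ⟪gradient f (x + t • u) - gradient f x, u⟫ := by
      rw [inner_sub_left]
    have h2 : ⟪gradient f (x + t • u) - gradient f x, u⟫ ≤ L1 * ‖u‖ ^ 2 * t := by
      calc ⟪gradient f (x + t • u) - gradient f x, u⟫
          ≤ ‖gradient f (x + t • u) - gradient f x‖ * ‖u‖ := real_inner_le_norm _ _
        _ ≤ (L1 * ‖x + t • u - x‖) * ‖u‖ := by
            gcongr; exact hglip _ _
        _ = L1 * ‖u‖ ^ 2 * t := by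
            have h3 : ‖x + t • u - x‖ = t * ‖u‖ := by
              simp [norm_smul, abs_of_nonneg ht.1]
            rw [h3]; ring
    linarith [h1 ▸ h2]
  have hval : (∫ t in (0:ℝ)..1, (⟪gradient f x, u⟫ + L1 * ‖u‖ ^ 2 * t))
      = ⟪gradient f x, u⟫ + L1 / 2 * ‖u‖ ^ 2 := by
    rw [intervalIntegral.integral_add (by apply Continuous.intervalIntegrable; fun_prop)
      (by apply Continuous.intervalIntegrable; fun_prop)]
    rw [intervalIntegral.integral_const_mul, integral_id, intervalIntegral.integral_const]
    norm_num
    ring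
  linarith [key ▸ (hval ▸ hmono)]

lemma taylor2 (f : E → ℝ) (L2 : ℝ) (hf : ContDiff ℝ 2 f)
    (hHlip : ∀ a b : E, ‖fderiv ℝ (gradient f) a - fderiv ℝ (gradient f) b‖ ≤ L2 * ‖a - b‖)
    (x u : E) :
    f (x + u) ≤ f x + ⟪gradient f x, u⟫ + 1 / 2 * ⟪(fderiv ℝ (gradient f) x) u, u⟫
      + L2 / 6 * ‖u‖ ^ 3 := by
  set H := fderiv ℝ (gradient f) with hH
  have step : ∀ t ∈ Set.Icc (0:ℝ) 1, ⟪gradient f (x + t • u), u⟫ ≤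
      ⟪gradient f x, u⟫ + ⟪(H x) u, u⟫ * t + L2 * ‖u‖ ^ 3 / 2 * t ^ 2 := by
    intro t ht
    have key : ⟪gradient f (x + t • u), u⟫ - ⟪gradient f (x + (0:ℝ) • u), u⟫
        = ∫ s in (0:ℝ)..t, ⟪(H (x + s • u)) u, u⟫ := by
      have := intervalIntegral.integral_eq_sub_of_hasDerivAt
        (f := fun s : ℝ => ⟪gradient f (x + s • u), u⟫) (a := 0) (b := t)
        (fun s _ => deriv2 f hf x u s) ((cont2 f hf x u).intervalIntegrable 0 t)
      simpa using this.symm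
    have hmono : (∫ s in (0:ℝ)..t, ⟪(H (x + s • u)) u, u⟫) ≤
        ∫ s in (0:ℝ)..t, (⟪(H x) u, u⟫ + L2 * ‖u‖ ^ 3 * s) := by
      apply intervalIntegral.integral_mono_on ht.1
        ((cont2 f hf x u).intervalIntegrable 0 t)
        (by apply Continuous.intervalIntegrable; fun_prop)
      intro s hs
      have h1 : ⟪(H (x + s • u)) u, u⟫ - ⟪(H x) u, u⟫
          = ⟪(H (x + s • u) - H x) u, u⟫ := by
        rw [ContinuousLinearMap.sub_apply, inner_sub_left]
      have h2 : ⟪(H (x + s • u) - H x) u, u⟫ ≤ L2 * ‖u‖ ^ 3 * s := by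
        calc ⟪(H (x + s • u) - H x) u, u⟫
            ≤ ‖(H (x + s • u) - H x) u‖ * ‖u‖ := real_inner_le_norm _ _
          _ ≤ (‖H (x + s • u) - H x‖ * ‖u‖) * ‖u‖ := by
              gcongr; exact (H (x + s • u) - H x).le_opNorm u
          _ ≤ ((L2 * ‖x + s • u - x‖) * ‖u‖) * ‖u‖ := by
              gcongr; exact hHlip _ _
          _ = L2 * ‖u‖ ^ 3 * s := by
              have h3 : ‖x + s • u - x‖ = s * ‖u‖ := by
                simp [norm_smul, abs_of_nonneg hs.1]
              rw [h3]; ring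
      linarith [h1 ▸ h2]
    have hval : (∫ s in (0:ℝ)..t, (⟪(H x) u, u⟫ + L2 * ‖u‖ ^ 3 * s))
        = ⟪(H x) u, u⟫ * t + L2 * ‖u‖ ^ 3 / 2 * t ^ 2 := by
      rw [intervalIntegral.integral_add (by apply Continuous.intervalIntegrable; fun_prop)
        (by apply Continuous.intervalIntegrable; fun_prop),
        intervalIntegral.integral_const_mul, integral_id, intervalIntegral.integral_const]
      simp
      ring
    have h0 : ⟪gradient f (x + (0:ℝ) • u), u⟫ = ⟪gradient f x, u⟫ := by norm_num
    rw [h0] at key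
    linarith [key ▸ (hval ▸ hmono)]
  have key : f (x + u) - f x = ∫ t in (0:ℝ)..1, ⟪gradient f (x + t • u), u⟫ := by
    have := intervalIntegral.integral_eq_sub_of_hasDerivAt
      (f := fun s : ℝ => f (x + s • u)) (a := 0) (b := 1)
      (fun t _ => deriv1 f hf x u t) ((cont1 f hf x u).intervalIntegrable 0 1)
    simpa using this.symm
  have hmono : (∫ t in (0:ℝ)..1, ⟪gradient f (x + t • u), u⟫) ≤
      ∫ t in (0:ℝ)..1, (⟪gradient f x, u⟫ + ⟪(H x) u, u⟫ * t + L2 * ‖u‖ ^ 3 / 2 * t ^ 2) := by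
    apply intervalIntegral.integral_mono_on (by norm_num)
      ((cont1 f hf x u).intervalIntegrable 0 1)
      (by apply Continuous.intervalIntegrable; fun_prop)
    exact step
  have hval : (∫ t in (0:ℝ)..1,
        (⟪gradient f x, u⟫ + ⟪(H x) u, u⟫ * t + L2 * ‖u‖ ^ 3 / 2 * t ^ 2))
      = ⟪gradient f x, u⟫ + 1 / 2 * ⟪(H x) u, u⟫ + L2 / 6 * ‖u‖ ^ 3 := by
    rw [intervalIntegral.integral_add (by apply Continuous.intervalIntegrable; fun_prop)
      (by apply Continuous.intervalIntegrable; fun_prop),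
      intervalIntegral.integral_add (by apply Continuous.intervalIntegrable; fun_prop)
      (by apply Continuous.intervalIntegrable; fun_prop),
      intervalIntegral.integral_const_mul, intervalIntegral.integral_const_mul,
      integral_id, integral_pow, intervalIntegral.integral_const]
    simp
    ring
  linarith [key ▸ (hval ▸ hmono)]

end Taylor
set_option maxHeartbeats 1000000 in
/-- Corollary on NCG-A1 as a subroutine of NCG-B1: running NCG-A1 with
accuracies `(ε₂^{3/2}, ε₂)` returns a point whose Hessian has smallest eigenvalue `≥ -ε₂`. -/
theorem NCG_A1_subroutine_guarantee {d : ℕ}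
    (f : EuclideanSpace ℝ (Fin d) → ℝ) (L1 L2 ε₂ Δ : ℝ)
    (hL1 : 0 < L1) (hL2 : 0 < L2) (hε₂ : 0 < ε₂) (hε₂1 : ε₂ < 1)
    (hf : ContDiff ℝ 2 f)
    (hglip : ∀ a b : EuclideanSpace ℝ (Fin d),
      ‖gradient f a - gradient f b‖ ≤ L1 * ‖a - b‖)
    (hHlip : ∀ a b : EuclideanSpace ℝ (Fin d),
      ‖fderiv ℝ (gradient f) a - fderiv ℝ (gradient f) b‖ ≤ L2 * ‖a - b‖)
    (x₀ : EuclideanSpace ℝ (Fin d))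
    (hΔ : ∀ z : EuclideanSpace ℝ (Fin d), f x₀ - f z ≤ Δ)
    (x v : ℕ → EuclideanSpace ℝ (Fin d))
    (hx1 : x 1 = x₀)
    (hv : ∀ j : ℕ, 1 ≤ j → ‖v j‖ = 1)
    (hvneg : ∀ j : ℕ, 1 ≤ j → ⟪(fderiv ℝ (gradient f) (x j)) (v j), v j⟫ ≤ 0)
    (hmin : ∀ j : ℕ, 1 ≤ j → ∀ u : EuclideanSpace ℝ (Fin d), ‖u‖ = 1 →
      ⟪(fderiv ℝ (gradient f) (x j)) u, u⟫ ≥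
        ⟪(fderiv ℝ (gradient f) (x j)) (v j), v j⟫ -
          max ε₂ ‖gradient f (x j)‖ / 2)
    (hupd : ∀ j : ℕ, 1 ≤ j →
      x (j + 1) =
        if 2 * |⟪(fderiv ℝ (gradient f) (x j)) (v j), v j⟫| ^ 3 / (3 * L2 ^ 2) >
            ‖gradient f (x j)‖ ^ 2 / (2 * L1) then
          x j - ((2 * |⟪(fderiv ℝ (gradient f) (x j)) (v j), v j⟫| / L2) *
            sgn ⟪gradient f (x j), v j⟫) • v j
        else
          x j - (1 / L1) • gradient f (x j)) :
    ∃ jstar : ℕ, 1 ≤ jstar ∧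
      (⟪(fderiv ℝ (gradient f) (x jstar)) (v jstar), v jstar⟫ > -ε₂ / 2 ∧
        ‖gradient f (x jstar)‖ ≤ ε₂ ^ ((3 : ℝ) / 2)) ∧
      (∀ i : ℕ, 1 ≤ i → i < jstar →
        ¬(⟪(fderiv ℝ (gradient f) (x i)) (v i), v i⟫ > -ε₂ / 2 ∧
          ‖gradient f (x i)‖ ≤ ε₂ ^ ((3 : ℝ) / 2))) ∧
      (jstar : ℝ) ≤
        1 + (max (12 * L2 ^ 2) (2 * L1) / ε₂ ^ 3) * (f (x 1) - f (x jstar)) ∧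
      (jstar : ℝ) ≤ 1 + (max (12 * L2 ^ 2) (2 * L1) / ε₂ ^ 3) * Δ ∧
      ∀ u : EuclideanSpace ℝ (Fin d), ‖u‖ = 1 →
        ⟪(fderiv ℝ (gradient f) (x jstar)) u, u⟫ ≥ -ε₂ := by
  classical
  set M : ℝ := max (12 * L2 ^ 2) (2 * L1) with hMdef
  have hM : 0 < M := lt_max_of_lt_right (by positivity)
  set δ : ℝ := ε₂ ^ 3 / M with hδdef
  have hδ : 0 < δ := by positivity
  set P : ℕ → Prop := fun j =>
    ⟪(fderiv ℝ (gradient f) (x j)) (v j), v j⟫ > -ε₂ / 2 ∧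
      ‖gradient f (x j)‖ ≤ ε₂ ^ ((3 : ℝ) / 2) with hPdef
  have hε32 : (ε₂ ^ ((3 : ℝ) / 2)) ^ 2 = ε₂ ^ 3 := by
    rw [← Real.rpow_natCast (ε₂ ^ ((3 : ℝ) / 2)) 2, ← Real.rpow_mul hε₂.le,
      ← Real.rpow_natCast ε₂ 3]
    norm_num
  have hε32nn : 0 ≤ ε₂ ^ ((3 : ℝ) / 2) := Real.rpow_nonneg hε₂.le _
  have hδ12 : δ ≤ ε₂ ^ 3 / (12 * L2 ^ 2) := by
    rw [hδdef]; gcongr; exact le_max_left _ _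
  have hδ2 : δ ≤ ε₂ ^ 3 / (2 * L1) := by
    rw [hδdef]; gcongr; exact le_max_right _ _
  -- sufficient decrease
  have hdec : ∀ j : ℕ, 1 ≤ j → ¬ P j → f (x (j + 1)) + δ ≤ f (x j) := by
    intro j hj hnP
    set g := gradient f (x j) with hgdef
    set lam := ⟪(fderiv ℝ (gradient f) (x j)) (v j), v j⟫ with hlamdef
    have hlam0 : lam ≤ 0 := hvneg j hj
    have hA : |lam| = -lam := abs_of_nonpos hlam0
    have hvj : ‖v j‖ = 1 := hv j hj
    have hcases : lam ≤ -ε₂ / 2 ∨ ε₂ ^ ((3 : ℝ) / 2) < ‖g‖ := by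
      rcases not_and_or.mp hnP with h | h
      · left; exact not_lt.mp h
      · right; exact not_le.mp h
    have hgsq : lam ≤ -ε₂ / 2 → ε₂ ^ 3 / (12 * L2 ^ 2) ≤ 2 * |lam| ^ 3 / (3 * L2 ^ 2) := by
      intro h
      have h1 : ε₂ / 2 ≤ |lam| := by rw [hA]; linarith
      have h2 : (ε₂ / 2) ^ 3 ≤ |lam| ^ 3 := by gcongr
      rw [div_le_div_iff₀ (by positivity) (by positivity)]
      nlinarith [sq_nonneg L2, hL2]
    have hgg : ε₂ ^ ((3 : ℝ) / 2) < ‖g‖ → ε₂ ^ 3 / (2 * L1) ≤ ‖g‖ ^ 2 / (2 * L1) := by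
      intro h
      have : ε₂ ^ 3 < ‖g‖ ^ 2 := by
        rw [← hε32]; exact pow_lt_pow_left₀ h hε32nn (by norm_num)
      gcongr
    rw [hupd j hj]
    by_cases hcase : 2 * |lam| ^ 3 / (3 * L2 ^ 2) > ‖g‖ ^ 2 / (2 * L1)
    · rw [if_pos hcase]
      set c : ℝ := 2 * |lam| / L2 * sgn ⟪g, v j⟫ with hcdef
      have hrw : x j - c • v j = x j + (-c) • v j := by
        rw [neg_smul, sub_eq_add_neg]
      rw [hrw]
      have ht2 := taylor2 f L2 hf hHlip (x j) ((-c) • v j)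
      have hip : ⟪g, (-c) • v j⟫ = -(2 * |lam| / L2) * |⟪g, v j⟫| := by
        rw [real_inner_smul_right, hcdef, ← sgn_mul_self ⟪g, v j⟫]; ring
      have hquad : ⟪(fderiv ℝ (gradient f) (x j)) ((-c) • v j), (-c) • v j⟫
          = (2 * |lam| / L2) ^ 2 * lam := by
        rw [map_smul, real_inner_smul_left, real_inner_smul_right, ← hlamdef, hcdef]
        linear_combination (2 * |lam| / L2) ^ 2 * lam * sgn_sq ⟪g, v j⟫
      have hnorm : ‖(-c) • v j‖ = 2 * |lam| / L2 := by
        rw [norm_smul, hvj, mul_one, Real.norm_eq_abs, abs_neg, hcdef, abs_mul, abs_sgn, mul_one,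
          abs_of_nonneg (by positivity)]
      rw [hip, hquad, hnorm] at ht2
      have hsum : 1 / 2 * ((2 * |lam| / L2) ^ 2 * lam) + L2 / 6 * (2 * |lam| / L2) ^ 3
          = -(2 * |lam| ^ 3 / (3 * L2 ^ 2)) := by
        rw [hA]; field_simp; ring
      have hδle : δ ≤ 2 * |lam| ^ 3 / (3 * L2 ^ 2) := by
        rcases hcases with h | h
        · exact hδ12.trans (hgsq h)
        · exact le_of_lt (lt_of_le_of_lt (hδ2.trans (hgg h)) hcase)
      have hinn : 0 ≤ 2 * |lam| / L2 * |⟪g, v j⟫| := by positivity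
      linarith
    · rw [if_neg hcase]
      push_neg at hcase
      have hrw : x j - (1 / L1) • g = x j + (-(1 / L1)) • g := by
        rw [neg_smul, sub_eq_add_neg]
      rw [hrw]
      have ht1 := taylor1 f L1 hf hglip (x j) ((-(1 / L1)) • g)
      have hip : ⟪g, (-(1 / L1)) • g⟫ = -(1 / L1) * ‖g‖ ^ 2 := by
        rw [real_inner_smul_right, real_inner_self_eq_norm_sq]
      have hnorm : ‖(-(1 / L1)) • g‖ ^ 2 = (1 / L1) ^ 2 * ‖g‖ ^ 2 := by
        rw [norm_smul]
        rw [Real.norm_eq_abs, abs_neg, abs_of_nonneg (by positivity : (0:ℝ) ≤ 1 / L1)]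
        ring
      rw [hip, hnorm] at ht1
      have hsum : -(1 / L1) * ‖g‖ ^ 2 + L1 / 2 * ((1 / L1) ^ 2 * ‖g‖ ^ 2)
          = -(‖g‖ ^ 2 / (2 * L1)) := by field_simp; ring
      have hδle : δ ≤ ‖g‖ ^ 2 / (2 * L1) := by
        rcases hcases with h | h
        · exact (hδ12.trans (hgsq h)).trans hcase
        · exact hδ2.trans (hgg h)
      linarith
  -- existence of a successful iterate
  have hex : ∃ j : ℕ, 1 ≤ j ∧ P j := by
    by_contra hcon
    push_neg at hcon
    have hdesc : ∀ n : ℕ, f (x (n + 1)) ≤ f (x 1) - n * δ := by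
      intro n
      induction n with
      | zero => simp
      | succ n ih =>
        have h1 : f (x (n + 1 + 1)) + δ ≤ f (x (n + 1)) :=
          hdec (n + 1) (Nat.le_add_left 1 n) (hcon (n + 1) (Nat.le_add_left 1 n))
        push_cast
        push_cast at ih
        linarith
    obtain ⟨n, hn⟩ := exists_nat_gt (Δ / δ)
    have h1 : Δ < n * δ := (div_lt_iff₀ hδ).mp hn
    have h2 : f x₀ - f (x (n + 1)) ≤ Δ := hΔ _
    have h3 := hdesc n
    rw [hx1] at h3
    linarith
  have hjs1 : 1 ≤ Nat.find hex := (Nat.find_spec hex).1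
  have hPj : P (Nat.find hex) := (Nat.find_spec hex).2
  have tele : ∀ i : ℕ, 1 ≤ i → i ≤ Nat.find hex →
      f (x i) + ((i : ℝ) - 1) * δ ≤ f (x 1) := by
    intro i
    induction i with
    | zero => intro h; exact absurd h (by omega)
    | succ n ih =>
      intro _ hle
      rcases Nat.eq_zero_or_pos n with hn0 | hn1
      · subst hn0; norm_num
      · have hlt : n < Nat.find hex := lt_of_lt_of_le (Nat.lt_succ_self n) hle
        have hnP : ¬ P n := fun hPn => Nat.find_min hex hlt ⟨hn1, hPn⟩
        have h1 := hdec n hn1 hnP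
        have h2 := ih hn1 (le_of_lt hlt)
        push_cast
        linarith
  have h1 := tele (Nat.find hex) hjs1 le_rfl
  have h2 : ((Nat.find hex : ℝ) - 1) * δ ≤ f (x 1) - f (x (Nat.find hex)) := by linarith
  have h3 : ((Nat.find hex : ℝ) - 1) ≤ (f (x 1) - f (x (Nat.find hex))) / δ :=
    (le_div_iff₀ hδ).mpr h2
  have h4 : (f (x 1) - f (x (Nat.find hex))) / δ
      = M / ε₂ ^ 3 * (f (x 1) - f (x (Nat.find hex))) := by
    rw [hδdef, div_div_eq_mul_div]
    ring
  have hb1 : (Nat.find hex : ℝ) ≤ 1 + M / ε₂ ^ 3 * (f (x 1) - f (x (Nat.find hex))) := by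
    linarith [h4 ▸ h3]
  have hDle : f (x 1) - f (x (Nat.find hex)) ≤ Δ := by rw [hx1]; exact hΔ _
  have hMnn : 0 ≤ M / ε₂ ^ 3 := by positivity
  have hb2 : (Nat.find hex : ℝ) ≤ 1 + M / ε₂ ^ 3 * Δ := by
    have hmul := mul_le_mul_of_nonneg_left hDle hMnn
    linarith
  have heig : ∀ u : EuclideanSpace ℝ (Fin d), ‖u‖ = 1 →
      ⟪(fderiv ℝ (gradient f) (x (Nat.find hex))) u, u⟫ ≥ -ε₂ := by
    have h32 : ε₂ ^ ((3 : ℝ) / 2) ≤ ε₂ := by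
      have := Real.rpow_le_rpow_of_exponent_ge hε₂ hε₂1.le (by norm_num : (1:ℝ) ≤ 3 / 2)
      rwa [Real.rpow_one] at this
    have hgle : ‖gradient f (x (Nat.find hex))‖ ≤ ε₂ := hPj.2.trans h32
    have hmax : max ε₂ ‖gradient f (x (Nat.find hex))‖ = ε₂ := max_eq_left hgle
    intro u hu
    have hm := hmin (Nat.find hex) hjs1 u hu
    rw [hmax] at hm
    have := hPj.1
    linarith
  exact ⟨Nat.find hex, hjs1, hPj, fun i hi hlt hPi => Nat.find_min hex hlt ⟨hi, hPi⟩,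
    hb1, hb2, heig⟩
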